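/- Let V, W, K > 0 and let η(k) = min{V, W·(K/k − 1)} be the triangular speed-density relation on (0, K]. Then for every k ∈ (0, K), k·η(k)/(1 − k/K) ≤ W·K, with equality for all k ∈ [W·K/(V+W), K); hence sup_{k∈(0,K)} k·η(k)/(1 − k/K) = W·K. Consequently, for the triangular fundamental diagram the collision-free condition is equivalent to ΔN/Δt ≥ W·K. -/

import Mathlib

/-- Triangular fundamental diagram `η(k) = min{V, W(K/k − 1)}`:
`k·η(k)/(1 − k/K) ≤ W·K` on `(0,K)`, with equality on `[WK/(V+W), K)`; hence the
supremum is `W·K`, and the collision-free condition is equivalent to `ΔN/Δt ≥ W·K`. -/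
theorem triangular_collision_free (V W K ΔN Δt : ℝ) (hV : 0 < V) (hW : 0 < W)
    (hK : 0 < K) (hΔN : 0 < ΔN) (hΔt : 0 < Δt) (η : ℝ → ℝ)
    (hη : ∀ k ∈ Set.Ioc (0 : ℝ) K, η k = min V (W * (K / k - 1))) :
    (∀ k ∈ Set.Ioo (0 : ℝ) K, k * η k / (1 - k / K) ≤ W * K) ∧
    (∀ k ∈ Set.Ico (W * K / (V + W)) K, k * η k / (1 - k / K) = W * K) ∧
    sSup ((fun k => k * η k / (1 - k / K)) '' Set.Ioo (0 : ℝ) K) = W * K ∧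
    (ΔN / Δt ≥ sSup ((fun k => k * η k / (1 - k / K)) '' Set.Ioo (0 : ℝ) K) ↔
      ΔN / Δt ≥ W * K) := by
  have hVW : 0 < V + W := by linarith
  have hc0 : 0 < W * K / (V + W) := by positivity
  have hcK : W * K / (V + W) < K := by
    rw [div_lt_iff₀ hVW]
    nlinarith
  -- upper bound
  have h1 : ∀ k ∈ Set.Ioo (0 : ℝ) K, k * η k / (1 - k / K) ≤ W * K := by
    intro k hk
    obtain ⟨hk0, hkK⟩ := hk
    have hden : 0 < 1 - k / K := by
      have : k / K < 1 := (div_lt_one hK).mpr hkK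
      linarith
    rw [hη k ⟨hk0, hkK.le⟩]
    have hnum : k * min V (W * (K / k - 1)) ≤ W * K * (1 - k / K) := by
      have h2 : k * min V (W * (K / k - 1)) ≤ k * (W * (K / k - 1)) :=
        mul_le_mul_of_nonneg_left (min_le_right _ _) hk0.le
      have h3 : k * (W * (K / k - 1)) = W * K * (1 - k / K) := by
        field_simp
      linarith
    exact (div_le_iff₀ hden).mpr hnum
  -- equality on the congested branch
  have h2 : ∀ k ∈ Set.Ico (W * K / (V + W)) K, k * η k / (1 - k / K) = W * K := by
    intro k hk
    obtain ⟨hkc, hkK⟩ := hk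
    have hk0 : 0 < k := lt_of_lt_of_le hc0 hkc
    have hden : 0 < 1 - k / K := by
      have : k / K < 1 := (div_lt_one hK).mpr hkK
      linarith
    rw [hη k ⟨hk0, hkK.le⟩]
    have hmin : min V (W * (K / k - 1)) = W * (K / k - 1) := by
      apply min_eq_right
      rw [div_le_iff₀ hVW] at hkc
      rw [show W * (K / k - 1) = (W * K - W * k) / k by field_simp, div_le_iff₀ hk0]
      nlinarith
    rw [hmin]
    rw [div_eq_iff (ne_of_gt hden)]
    field_simp
  refine ⟨h1, h2, ?_⟩
  have hmem : W * K ∈ (fun k => k * η k / (1 - k / K)) '' Set.Ioo (0 : ℝ) K :=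
    ⟨W * K / (V + W), ⟨hc0, hcK⟩, h2 _ ⟨le_refl _, hcK⟩⟩
  have hsup : sSup ((fun k => k * η k / (1 - k / K)) '' Set.Ioo (0 : ℝ) K) = W * K := by
    apply IsGreatest.csSup_eq
    refine ⟨hmem, ?_⟩
    rintro y ⟨k, hk, rfl⟩
    exact h1 k hk
  exact ⟨hsup, by rw [hsup]⟩
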